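/- For all x ∈ (0, 1/2), the derivative comparison M_⋆'(x) ≤ M_MS'(x) holds, where M_MS(x) = (π/4)·log(1/(1−2x)), with equality exactly at the points x = κ_n; consequently M_⋆(x) < M_MS(x) for all x ∈ (0, 1/2). -/

import Mathlib

open Real

namespace MstarAux

noncomputable def q : ℝ := (π^2 - 4)/(π^2 + 4)
noncomputable def s : ℝ := 4*π/(π^2+4)
noncomputable def kap (n : ℕ) : ℝ := (1 - q^n)/2
noncomputable def A : ℝ := arcsin (4*π/(π^2+4))
noncomputable def f (n : ℕ) : ℝ → ℝ := fun x => (n:ℝ)/2 * A + 1/2 * arcsin (π*(x - kap n)/q^n)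
noncomputable def hfun (t : ℝ) : ℝ := π/4 * Real.log (1/(1-2*t)) - 1/2 * arcsin (π*t)

lemma pi_gt : (3:ℝ) < π := pi_gt_three
lemma denom_pos : (0:ℝ) < π^2 + 4 := by positivity
lemma num_pos : (0:ℝ) < π^2 - 4 := by nlinarith [pi_gt]
lemma q_pos : 0 < q := div_pos num_pos denom_pos
lemma q_lt_one : q < 1 := by
  rw [q, div_lt_one denom_pos]; nlinarith
lemma qn_pos (n : ℕ) : 0 < q^n := pow_pos q_pos n
lemma s_pos : 0 < s := by unfold s; positivity
lemma s_lt_one : s < 1 := by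
  rw [s, div_lt_one denom_pos]; nlinarith [pi_gt]
lemma sq_q_add_sq_s : q^2 + s^2 = 1 := by
  rw [q, s, div_pow, div_pow, ← add_div, div_eq_one_iff_eq (by positivity)]
  ring
lemma sqrt_one_sub_s_sq : Real.sqrt (1 - s^2) = q := by
  rw [show 1 - s^2 = q^2 by linarith [sq_q_add_sq_s]]
  exact Real.sqrt_sq q_pos.le
lemma one_sub_two_kap (n : ℕ) : 1 - 2 * kap n = q^n := by unfold kap; ring
lemma one_sub_q_div_two : (1 - q)/2 = 4/(π^2+4) := by
  rw [q]; field_simp; ring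
lemma half_one_sub_q_pos : 0 < (1-q)/2 := by linarith [q_lt_one]
lemma s_eq : s = π * ((1-q)/2) := by rw [one_sub_q_div_two, s]; ring
lemma kap_strictMono : StrictMono kap := by
  intro m n h
  unfold kap
  have := pow_lt_pow_right_of_lt_one₀ q_pos q_lt_one h
  linarith [this]
lemma kap_succ_sub (n : ℕ) : kap (n+1) - kap n = q^n * ((1-q)/2) := by
  unfold kap; rw [pow_succ]; ring
lemma kap_zero : kap 0 = 0 := by unfold kap; norm_num

lemma sqrt_ge (t : ℝ) (ht0 : 0 ≤ t) (ht1 : t ≤ (1-q)/2) :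
    1 - 2*t ≤ Real.sqrt (1 - (π*t)^2) := by
  have hts : π*t ≤ s := by rw [s_eq]; exact mul_le_mul_of_nonneg_left ht1 pi_pos.le
  have ht0' : 0 ≤ π*t := mul_nonneg pi_pos.le ht0
  have h1 : t*(π^2+4) ≤ 4 := by
    rw [one_sub_q_div_two] at ht1; exact (le_div_iff₀ denom_pos).1 ht1
  have h2 : (1-2*t)^2 ≤ 1 - (π*t)^2 := by nlinarith [mul_le_mul_of_nonneg_left h1 ht0]
  calc 1 - 2*t ≤ |1-2*t| := le_abs_self _
    _ = Real.sqrt ((1-2*t)^2) := (Real.sqrt_sq_eq_abs _).symm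
    _ ≤ _ := Real.sqrt_le_sqrt h2

lemma sqrt_gt (t : ℝ) (ht0 : 0 < t) (ht1 : t < (1-q)/2) :
    1 - 2*t < Real.sqrt (1 - (π*t)^2) := by
  have hts : π*t < s := by rw [s_eq]; exact (mul_lt_mul_iff_right₀ pi_pos).2 ht1
  have ht0' : 0 < π*t := mul_pos pi_pos ht0
  have h1 : t*(π^2+4) < 4 := by
    rw [one_sub_q_div_two] at ht1; exact (lt_div_iff₀ denom_pos).1 ht1
  have h2 : (1-2*t)^2 < 1 - (π*t)^2 := by nlinarith [mul_lt_mul_of_pos_left h1 ht0]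
  calc 1-2*t ≤ |1-2*t| := le_abs_self _
    _ = Real.sqrt ((1-2*t)^2) := (Real.sqrt_sq_eq_abs _).symm
    _ < _ := Real.sqrt_lt_sqrt (sq_nonneg _) h2

lemma hasDerivAt_f (n : ℕ) (x : ℝ) (h1 : -1 < π*(x - kap n)/q^n) (h2 : π*(x - kap n)/q^n < 1) :
    HasDerivAt (f n) (π / (2 * q^n * Real.sqrt (1 - (π*(x - kap n)/q^n)^2))) x := by
  have hg : HasDerivAt (fun y => π*(y - kap n)/q^n) (π/q^n) x := by
    simpa using (((hasDerivAt_id x).sub_const (kap n)).const_mul π).div_const (q^n)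
  have ha := (Real.hasDerivAt_arcsin (ne_of_gt h1) (ne_of_lt h2)).comp x hg
  have hf : HasDerivAt (f n) _ x := (ha.const_mul (1/2 : ℝ)).const_add ((n:ℝ)/2 * A)
  convert hf using 1
  have hs : (0:ℝ) < Real.sqrt (1 - (π*(x - kap n)/q^n)^2) := by
    apply Real.sqrt_pos.2; nlinarith
  have hq := qn_pos n
  field_simp

lemma hasDerivAt_MMS (x : ℝ) (hx : 1 - 2*x ≠ 0) :
    HasDerivAt (fun y => π/4 * Real.log (1/(1-2*y))) (π/(2*(1-2*x))) x := by
  have h1 : HasDerivAt (fun y : ℝ => 1 - 2*y) (-2) x := by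
    simpa using ((hasDerivAt_id x).const_mul (2:ℝ)).const_sub 1
  have h2 : HasDerivAt (fun y => Real.log (1-2*y)) ((1-2*x)⁻¹ * (-2)) x :=
    by have := (Real.hasDerivAt_log hx).comp x h1; exact this
  have h3 : HasDerivAt (fun y => π/4 * Real.log (1/(1-2*y))) (π/4 * -((1-2*x)⁻¹ * (-2))) x := by
    have he : (fun y => π/4 * Real.log (1/(1-2*y))) = fun y => π/4 * -(Real.log (1-2*y)) := by
      funext y; rw [one_div, Real.log_inv]
    rw [he]; exact h2.neg.const_mul _
  convert h3 using 1
  field_simp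
  ring

lemma exists_piece {x : ℝ} (hx0 : 0 ≤ x) (hx : x < 1/2) :
    ∃ n, kap n ≤ x ∧ x < kap (n+1) := by
  have hex : ∃ n, x < kap (n+1) := by
    have h := tendsto_pow_atTop_nhds_zero_of_lt_one q_pos.le q_lt_one
    have h2 : ∀ᶠ n in Filter.atTop, q^n < 1 - 2*x :=
      h.eventually_lt_const (by linarith)
    obtain ⟨n, hn⟩ := h2.exists
    refine ⟨n, ?_⟩
    have : q^(n+1) ≤ q^n := pow_le_pow_of_le_one q_pos.le q_lt_one.le (Nat.le_succ n)
    unfold kap; linarith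
  classical
  refine ⟨Nat.find hex, ?_, Nat.find_spec hex⟩
  rcases Nat.eq_zero_or_pos (Nat.find hex) with h0 | h0
  · rw [h0, kap_zero]; exact hx0
  · have hm := Nat.find_min hex (Nat.sub_lt h0 one_pos)
    have he : Nat.find hex - 1 + 1 = Nat.find hex := by omega
    rw [he] at hm
    exact not_lt.1 hm

lemma one_sub_two_t_pos {t : ℝ} (ht : t ≤ (1-q)/2) : 0 < 1 - 2*t := by
  have := q_pos; linarith

lemma hasDerivAt_hfun (t : ℝ) (h1 : -1 < π*t) (h2 : π*t < 1) (h3 : 1-2*t ≠ 0) :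
    HasDerivAt hfun (π/(2*(1-2*t)) - 1/2 * (1/Real.sqrt (1-(π*t)^2) * π)) t := by
  have ha : HasDerivAt (fun y : ℝ => π*y) π t := by simpa using (hasDerivAt_id t).const_mul π
  have hb := (Real.hasDerivAt_arcsin (ne_of_gt h1) (ne_of_lt h2)).comp t ha
  exact (hasDerivAt_MMS t h3).sub (hb.const_mul (1/2))

lemma pit_bounds {t : ℝ} (ht0 : 0 ≤ t) (ht1 : t ≤ (1-q)/2) : -1 < π*t ∧ π*t < 1 := by
  have h1 : π*t ≤ s := by rw [s_eq]; exact mul_le_mul_of_nonneg_left ht1 pi_pos.le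
  have h2 : 0 ≤ π*t := mul_nonneg pi_pos.le ht0
  exact ⟨by linarith, lt_of_le_of_lt h1 s_lt_one⟩

lemma hfun_strictMono : StrictMonoOn hfun (Set.Icc 0 ((1-q)/2)) := by
  have hd : ∀ t ∈ Set.Icc (0:ℝ) ((1-q)/2),
      HasDerivAt hfun (π/(2*(1-2*t)) - 1/2 * (1/Real.sqrt (1-(π*t)^2) * π)) t := by
    intro t ht
    obtain ⟨h1, h2⟩ := pit_bounds ht.1 ht.2
    exact hasDerivAt_hfun t h1 h2 (one_sub_two_t_pos ht.2).ne'
  apply strictMonoOn_of_deriv_pos (convex_Icc _ _)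
  · exact fun t ht => (hd t ht).continuousAt.continuousWithinAt
  · intro t ht
    rw [interior_Icc] at ht
    rw [(hd t ⟨ht.1.le, ht.2.le⟩).deriv]
    have hsq := sqrt_gt t ht.1 ht.2
    have h12 := one_sub_two_t_pos ht.2.le
    have hsqpos : 0 < Real.sqrt (1 - (π*t)^2) := lt_trans h12 hsq
    have key : π/(2*Real.sqrt (1-(π*t)^2)) < π/(2*(1-2*t)) := by
      apply div_lt_div_of_pos_left pi_pos (by linarith) (by linarith)
    have : (1:ℝ)/2 * (1/Real.sqrt (1-(π*t)^2) * π) = π/(2*Real.sqrt (1-(π*t)^2)) := by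
      field_simp
    rw [this]; linarith

lemma hfun_zero : hfun 0 = 0 := by unfold hfun; norm_num

lemma hfun_end : hfun ((1-q)/2) = π/4 * Real.log (1/q) - A/2 := by
  unfold hfun
  rw [← s_eq, show (1:ℝ) - 2*((1-q)/2) = q by ring, show arcsin s = A by rw [A, s]]
  ring

lemma hfun_end_pos : 0 < hfun ((1-q)/2) := by
  have := hfun_strictMono (Set.left_mem_Icc.2 half_one_sub_q_pos.le)
    (Set.right_mem_Icc.2 half_one_sub_q_pos.le) half_one_sub_q_pos
  rwa [hfun_zero] at this

lemma hfun_pos {t : ℝ} (ht0 : 0 < t) (ht1 : t ≤ (1-q)/2) : 0 < hfun t := by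
  have := hfun_strictMono (Set.left_mem_Icc.2 half_one_sub_q_pos.le) ⟨ht0.le, ht1⟩ ht0
  rwa [hfun_zero] at this

lemma hfun_nonneg {t : ℝ} (ht0 : 0 ≤ t) (ht1 : t ≤ (1-q)/2) : 0 ≤ hfun t := by
  rcases eq_or_lt_of_le ht0 with h | h
  · rw [← h, hfun_zero]
  · exact (hfun_pos h ht1).le

lemma u_nonneg {n : ℕ} {x : ℝ} (hx1 : kap n ≤ x) : 0 ≤ π*(x - kap n)/q^n :=
  div_nonneg (mul_nonneg pi_pos.le (by linarith)) (qn_pos n).le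

lemma u_lt_s {n : ℕ} {x : ℝ} (hx2 : x < kap (n+1)) : π*(x - kap n)/q^n < s := by
  rw [div_lt_iff₀ (qn_pos n)]
  have h : x - kap n < q^n * ((1-q)/2) := by linarith [kap_succ_sub n]
  rw [s_eq]
  nlinarith [mul_lt_mul_of_pos_left h pi_pos]

lemma arg_at_right (m : ℕ) : π*(kap (m+1) - kap m)/q^m = s := by
  rw [kap_succ_sub, s_eq]
  field_simp [(qn_pos m).ne']

lemma arcsin_s_eq_A : arcsin s = A := by rw [A, s]

lemma f_glue (m : ℕ) : f m (kap (m+1)) = f (m+1) (kap (m+1)) := by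
  unfold f
  rw [arg_at_right, arcsin_s_eq_A, sub_self]
  norm_num
  rw [A]
  ring

lemma deriv_f_at_kap (m : ℕ) :
    HasDerivAt (f m) (π / (2 * q^(m+1))) (kap (m+1)) := by
  have h1 : -1 < π*(kap (m+1) - kap m)/q^m := by rw [arg_at_right]; linarith [s_pos]
  have h2 : π*(kap (m+1) - kap m)/q^m < 1 := by rw [arg_at_right]; exact s_lt_one
  have := hasDerivAt_f m (kap (m+1)) h1 h2
  rw [arg_at_right, sqrt_one_sub_s_sq] at this
  convert this using 2
  rw [pow_succ]; ring

lemma M_deriv (M : ℝ → ℝ) (hM' : ∀ n, ∀ x ∈ Set.Ico (kap n) (kap (n+1)), M x = f n x)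
    {n : ℕ} {x : ℝ} (hx1 : kap n ≤ x) (hx2 : x < kap (n+1)) (hx0 : 0 < x) :
    HasDerivAt M (π / (2 * q^n * Real.sqrt (1 - (π*(x - kap n)/q^n)^2))) x := by
  have h1 : -1 < π*(x - kap n)/q^n := lt_of_lt_of_le (by norm_num) (u_nonneg hx1)
  have h2 : π*(x - kap n)/q^n < 1 := lt_trans (u_lt_s hx2) s_lt_one
  rcases lt_or_eq_of_le hx1 with hlt | heq
  · have hmem : Set.Ioo (kap n) (kap (n+1)) ∈ nhds x := Ioo_mem_nhds hlt hx2
    have heqf : M =ᶠ[nhds x] f n :=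
      Filter.eventuallyEq_of_mem hmem (fun y hy => hM' n y ⟨hy.1.le, hy.2⟩)
    exact (hasDerivAt_f n x h1 h2).congr_of_eventuallyEq heqf
  · have hxe : x = kap n := heq.symm
    obtain ⟨m, rfl⟩ : ∃ m, n = m + 1 := by
      rcases n with _ | m
      · exfalso; rw [hxe, kap_zero] at hx0; exact lt_irrefl 0 hx0
      · exact ⟨m, rfl⟩
    have hu0 : π*(x - kap (m+1))/q^(m+1) = 0 := by rw [hxe, sub_self, mul_zero, zero_div]
    rw [hu0]
    norm_num
    have hr : HasDerivWithinAt M (π / (2 * q^(m+1))) (Set.Ici x) x := by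
      have hfr := ((hasDerivAt_f (m+1) x h1 h2).hasDerivWithinAt (s := Set.Ici x))
      rw [hu0] at hfr
      norm_num [Real.sqrt_one] at hfr
      refine hfr.congr_of_eventuallyEq ?_ (hM' (m+1) x ⟨hx1, hx2⟩)
      have hset : Set.Ico (kap (m+1)) (kap (m+2)) ∈ nhdsWithin x (Set.Ici x) :=
        Ico_mem_nhdsGE_of_mem ⟨hx1, hx2⟩
      exact Filter.eventuallyEq_of_mem hset (fun y hy => hM' (m+1) y hy)
    have hl : HasDerivWithinAt M (π / (2 * q^(m+1))) (Set.Iic x) x := by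
      have hfl := (deriv_f_at_kap m).hasDerivWithinAt (s := Set.Iic (kap (m+1)))
      rw [← hxe] at hfl
      refine hfl.congr_of_eventuallyEq ?_ ?_
      · have hset : Set.Icc (kap m) x ∈ nhdsWithin x (Set.Iic x) := by
          apply Icc_mem_nhdsLE_of_mem
          refine ⟨?_, le_rfl⟩
          rw [hxe]; exact kap_strictMono (Nat.lt_succ_self m)
        refine Filter.eventuallyEq_of_mem hset (fun y hy => ?_)
        rcases lt_or_eq_of_le hy.2 with hlt2 | heq2
        · exact hM' m y ⟨hy.1, by rw [← hxe]; exact hlt2⟩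
        · rw [heq2, hM' (m+1) x ⟨hx1, hx2⟩, hxe, ← f_glue]
      · rw [hM' (m+1) x ⟨hx1, hx2⟩, hxe, ← f_glue]
    have hcomb := hl.union hr
    rw [Set.Iic_union_Ici] at hcomb
    exact hcomb.hasDerivAt (Filter.univ_mem)

end MstarAux

open MstarAux
/-- For any function `M` satisfying the piecewise definition of `M_⋆`, one has
`M'(x) ≤ M_MS'(x)` on `(0,1/2)` with equality exactly at the points `κ n`, where
`M_MS(x) = (π/4) log(1/(1−2x))`; consequently `M x < M_MS x` on `(0,1/2)`. -/
theorem Mstar_deriv_le_MMS_deriv (M : ℝ → ℝ)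
    (hM : ∀ n : ℕ, ∀ x ∈ Set.Ico ((1 - ((π ^ 2 - 4) / (π ^ 2 + 4)) ^ n) / 2)
        ((1 - ((π ^ 2 - 4) / (π ^ 2 + 4)) ^ (n + 1)) / 2),
      M x = (n : ℝ) / 2 * Real.arcsin (4 * π / (π ^ 2 + 4))
          + 1 / 2 * Real.arcsin (π * (x - (1 - ((π ^ 2 - 4) / (π ^ 2 + 4)) ^ n) / 2)
              / (1 - 2 * ((1 - ((π ^ 2 - 4) / (π ^ 2 + 4)) ^ n) / 2)))) :
    (∀ x ∈ Set.Ioo (0 : ℝ) (1 / 2),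
        deriv M x ≤ deriv (fun y => π / 4 * Real.log (1 / (1 - 2 * y))) x ∧
          (deriv M x = deriv (fun y => π / 4 * Real.log (1 / (1 - 2 * y))) x ↔
            ∃ n : ℕ, x = (1 - ((π ^ 2 - 4) / (π ^ 2 + 4)) ^ n) / 2)) ∧
      ∀ x ∈ Set.Ioo (0 : ℝ) (1 / 2), M x < π / 4 * Real.log (1 / (1 - 2 * x)) := by
  have hM' : ∀ n, ∀ x ∈ Set.Ico (kap n) (kap (n+1)), M x = f n x := by
    intro n x hx
    rw [hM n x hx,
      show (1:ℝ) - 2 * ((1 - ((π^2-4)/(π^2+4))^n)/2) = ((π^2-4)/(π^2+4))^n from by ring]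
    rfl
  constructor
  · rintro x ⟨hx0, hxh⟩
    obtain ⟨n, hx1, hx2⟩ := exists_piece hx0.le hxh
    have hdM := (M_deriv M hM' hx1 hx2 hx0).deriv
    have h12x : (0:ℝ) < 1 - 2*x := by linarith
    have hdD := (hasDerivAt_MMS x h12x.ne').deriv
    rw [hdM, hdD]
    set t := (x - kap n)/q^n with htdef
    have harg : π*(x - kap n)/q^n = π*t := by rw [htdef]; ring
    have ht0 : 0 ≤ t := div_nonneg (by linarith) (qn_pos n).le
    have ht1 : t < (1-q)/2 := by
      rw [htdef, div_lt_iff₀ (qn_pos n)]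
      have := kap_succ_sub n; nlinarith [qn_pos n]
    have h2x : 1 - 2*x = q^n * (1 - 2*t) := by
      have hin : q^n * (1 - 2*t) = q^n - 2*(x - kap n) := by
        rw [htdef]; field_simp [(qn_pos n).ne']
      rw [hin, ← one_sub_two_kap n]; ring
    have h2t : 0 < 1 - 2*t := one_sub_two_t_pos ht1.le
    have hsq_ge := sqrt_ge t ht0 ht1.le
    have hsqpos : 0 < Real.sqrt (1-(π*t)^2) := lt_of_lt_of_le h2t hsq_ge
    rw [harg, h2x, show π/(2*(q^n*(1-2*t))) = π/(2*q^n*(1-2*t)) from by rw [mul_assoc]]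
    have hb : 0 < 2*q^n*(1-2*t) := by have := qn_pos n; nlinarith
    have hstrict : 0 < t → π/(2*q^n*Real.sqrt (1-(π*t)^2)) < π/(2*q^n*(1-2*t)) := by
      intro htpos
      have hsq_gt := sqrt_gt t htpos ht1
      apply div_lt_div_of_pos_left pi_pos hb
      nlinarith [qn_pos n]
    have heq0 : t = 0 → π/(2*q^n*Real.sqrt (1-(π*t)^2)) = π/(2*q^n*(1-2*t)) := by
      intro ht; rw [ht]; norm_num
    constructor
    · rcases eq_or_lt_of_le ht0 with h | h
      · rw [heq0 h.symm]
      · exact (hstrict h).le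
    · constructor
      · intro heqd
        refine ⟨n, ?_⟩
        rcases eq_or_lt_of_le ht0 with h | h
        · have hx0' : x - kap n = 0 := by
            have hxk : x - kap n = t * q^n := by rw [htdef]; field_simp [(qn_pos n).ne']
            rw [hxk, ← h, zero_mul]
          show x = kap n
          linarith
        · exact absurd heqd (ne_of_lt (hstrict h))
      · rintro ⟨m, hxm⟩
        have hxm' : x = kap m := hxm
        have hmn : m = n := by
          have h1' : n ≤ m := by
            by_contra hc
            push_neg at hc
            exact absurd (hxm' ▸ hx1) (not_le.2 (kap_strictMono hc))
          have h2' : m < n + 1 := by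
            by_contra hc
            push_neg at hc
            exact absurd (hxm' ▸ hx2) (not_lt.2 (kap_strictMono.le_iff_le.2 hc))
          omega
        have ht : t = 0 := by
          rw [htdef, hxm', hmn, sub_self, zero_div]
        exact heq0 ht
  · rintro x ⟨hx0, hxh⟩
    obtain ⟨n, hx1, hx2⟩ := exists_piece hx0.le hxh
    set t := (x - kap n)/q^n with htdef
    have harg : π*(x - kap n)/q^n = π*t := by rw [htdef]; ring
    have ht0 : 0 ≤ t := div_nonneg (by linarith) (qn_pos n).le
    have ht1 : t < (1-q)/2 := by
      rw [htdef, div_lt_iff₀ (qn_pos n)]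
      have := kap_succ_sub n; nlinarith [qn_pos n]
    have h2x : 1 - 2*x = q^n * (1 - 2*t) := by
      have hin : q^n * (1 - 2*t) = q^n - 2*(x - kap n) := by
        rw [htdef]; field_simp [(qn_pos n).ne']
      rw [hin, ← one_sub_two_kap n]; ring
    have h2t : 0 < 1 - 2*t := one_sub_two_t_pos ht1.le
    have hMx : M x = (n:ℝ)/2 * A + 1/2 * arcsin (π*t) := by
      rw [hM' n x ⟨hx1, hx2⟩]
      unfold f
      rw [harg]
    have hlog : Real.log (1/(1-2*x)) = -((n:ℝ)*Real.log q) - Real.log (1-2*t) := by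
      rw [h2x, one_div, Real.log_inv, Real.log_mul (pow_ne_zero n q_pos.ne') h2t.ne',
        Real.log_pow]
      push_cast; ring
    have key : π/4 * Real.log (1/(1-2*x)) - M x = (n:ℝ) * hfun ((1-q)/2) + hfun t := by
      rw [hMx, hlog, hfun_end]
      unfold hfun
      rw [one_div (1-2*t), Real.log_inv, one_div q, Real.log_inv]
      ring
    have hc1 : 0 ≤ (n:ℝ) * hfun ((1-q)/2) := mul_nonneg (Nat.cast_nonneg n) hfun_end_pos.le
    have hc2 : 0 ≤ hfun t := hfun_nonneg ht0 ht1.le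
    rcases Nat.eq_zero_or_pos n with h0 | h0
    · have htx : t = x := by
        rw [htdef, h0]
        simp [kap_zero]
      have := hfun_pos (htx ▸ hx0) ht1.le
      linarith
    · have hn1 : (1:ℝ) ≤ (n:ℝ) := Nat.one_le_cast.2 h0
      nlinarith [hfun_end_pos]
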